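/- The cyclic descent set is cyclic shuffle-compatible: if π, σ are disjoint permutations, π′, σ′ are disjoint permutations, |π| = |π′|, |σ| = |σ′|, cDes[π] = cDes[π′], and cDes[σ] = cDes[σ′], then the multiset {{cDes[τ] : [τ] ∈ [π] ⧢ [σ]}}, where [τ] ranges over the set of cyclic shuffles of [π] and [σ] (each cyclic shuffle counted once), equals the multiset {{cDes[τ] : [τ] ∈ [π′] ⧢ [σ′]}}. -/

import Mathlib

/-- A permutation: a list of distinct positive integers. -/
def IsPerm (π : List ℕ) : Prop := π.Nodup ∧ ∀ x ∈ π, 0 < x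

/-- The descent set `Des π = {i ∈ {1,…,n−1} : π_i > π_{i+1}}` (1-based indexing). -/
def Des (π : List ℕ) : Finset ℕ :=
  (Finset.Icc 1 (π.length - 1)).filter fun i => π.getD i 0 < π.getD (i - 1) 0

/-- The descent number. -/
def des (π : List ℕ) : ℕ := (Des π).card

/-- The major index. -/
def maj (π : List ℕ) : ℕ := ∑ i ∈ Des π, i

/-- The cyclic descent set `cDes π = {i ∈ {1,…,n} : π_i > π_{i+1}}`, indices mod `n`. -/
def cDes (π : List ℕ) : Finset ℕ :=
  (Finset.Icc 1 π.length).filter fun i => π.getD (i % π.length) 0 < π.getD (i - 1) 0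

/-- The cyclic descent number. -/
def cdes (π : List ℕ) : ℕ := (cDes π).card

/-- The cyclic major index. -/
def cmaj (π : List ℕ) : ℕ := ∑ i ∈ cDes π, i

/-- The peak set `Pk π = {i ∈ {2,…,n−1} : π_{i−1} < π_i > π_{i+1}}` (1-based indexing). -/
def Pk (π : List ℕ) : Finset ℕ :=
  (Finset.Icc 2 (π.length - 1)).filter fun i =>
    π.getD (i - 2) 0 < π.getD (i - 1) 0 ∧ π.getD i 0 < π.getD (i - 1) 0

/-- The peak number. -/
def pk (π : List ℕ) : ℕ := (Pk π).card

/-- The cyclic peak set `cPk π = {i ∈ {1,…,n} : π_{i−1} < π_i > π_{i+1}}`, indices mod `n`. -/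
def cPk (π : List ℕ) : Finset ℕ :=
  (Finset.Icc 1 π.length).filter fun i =>
    π.getD ((i + π.length - 2) % π.length) 0 < π.getD (i - 1) 0 ∧
      π.getD (i % π.length) 0 < π.getD (i - 1) 0

/-- The cyclic peak number. -/
def cpk (π : List ℕ) : ℕ := (cPk π).card

/-- The cyclic valley set `cVal π = {i ∈ {1,…,n} : π_{i−1} > π_i < π_{i+1}}`, indices mod `n`. -/
def cVal (π : List ℕ) : Finset ℕ :=
  (Finset.Icc 1 π.length).filter fun i =>
    π.getD (i - 1) 0 < π.getD ((i + π.length - 2) % π.length) 0 ∧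
      π.getD (i - 1) 0 < π.getD (i % π.length) 0

/-- The cyclic valley number. -/
def cval (π : List ℕ) : ℕ := (cVal π).card

/-- The distribution of a linear statistic `st` over the `n` rotations of `π`,
i.e. the multiset-valued cyclic statistic induced by `st`, evaluated at `[π]`. -/
def cycStat {A : Type*} (st : List ℕ → A) (π : List ℕ) : Multiset A :=
  (Multiset.range π.length).map fun i => st (π.rotate i)

/-- `τ` is a (linear) shuffle of `π` and `σ`. -/
def IsShuffle (π σ τ : List ℕ) : Prop :=
  π.Sublist τ ∧ σ.Sublist τ ∧ τ.length = π.length + σ.length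

/-- `[τ]` is a cyclic shuffle of `[π]` and `[σ]`: some rotation of `τ` is a shuffle
of some rotation of `π` and some rotation of `σ`. -/
def IsCyclicShuffle (π σ τ : List ℕ) : Prop :=
  ∃ i j k, IsShuffle (π.rotate i) (σ.rotate j) (τ.rotate k)

/-- The set of cyclic shuffles of `[π]` and `[σ]` (as elements of `Cycle ℕ`, so that each
cyclic shuffle is counted once) on which the statistic `cst` takes the value `v`. -/
def cycShuffleFiber {A : Type*} (cst : List ℕ → A) (π σ : List ℕ) (v : A) : Set (Cycle ℕ) :=
  {c : Cycle ℕ | ∃ τ : List ℕ, (↑τ : Cycle ℕ) = c ∧ IsCyclicShuffle π σ τ ∧ cst τ = v}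

/-- A (rotation-invariant) statistic `cst` is cyclic shuffle-compatible if the distribution
of `cst` over the set of cyclic shuffles of `[π]` and `[σ]` (each cyclic shuffle counted
once) depends only on `cst π`, `cst σ`, `|π|` and `|σ|`. -/
def CyclicShuffleCompatible {A : Type*} (cst : List ℕ → A) : Prop :=
  ∀ π σ π' σ' : List ℕ, IsPerm π → IsPerm σ → IsPerm π' → IsPerm σ' →
    π.Disjoint σ → π'.Disjoint σ' →
    π.length = π'.length → σ.length = σ'.length →
    cst π = cst π' → cst σ = cst σ' →
    ∀ v : A, (cycShuffleFiber cst π σ v).ncard = (cycShuffleFiber cst π' σ' v).ncard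


/- ===================== auxiliary lemmas ===================== -/

lemma mem_Des' {l : List ℕ} {i : ℕ} :
    i ∈ Des l ↔ (1 ≤ i ∧ i ≤ l.length - 1) ∧ l.getD i 0 < l.getD (i - 1) 0 := by
  simp [Des, Finset.mem_filter, Finset.mem_Icc]

lemma mem_cDes' {l : List ℕ} {i : ℕ} :
    i ∈ cDes l ↔ (1 ≤ i ∧ i ≤ l.length) ∧ l.getD (i % l.length) 0 < l.getD (i - 1) 0 := by
  simp [cDes, Finset.mem_filter, Finset.mem_Icc]

lemma Des_subset (l : List ℕ) : Des l ⊆ Finset.Icc 1 (l.length - 1) :=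
  Finset.filter_subset _ _

lemma cDes_subset (l : List ℕ) : cDes l ⊆ Finset.Icc 1 l.length :=
  Finset.filter_subset _ _

lemma mem_Des_getElem {l : List ℕ} {i : ℕ} (h1 : 1 ≤ i) (h2 : i < l.length) :
    i ∈ Des l ↔ l[i] < l[i-1] := by
  rw [mem_Des', List.getD_eq_getElem l 0 h2, List.getD_eq_getElem l 0 (show i-1 < l.length by omega)]
  exact ⟨fun ⟨_, h⟩ => h, fun h => ⟨⟨h1, by omega⟩, h⟩⟩

lemma Des_eq_cDes_erase (l : List ℕ) : Des l = (cDes l).erase l.length := by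
  ext i
  simp only [Finset.mem_erase, mem_Des', mem_cDes']
  constructor
  · rintro ⟨⟨h1, h2⟩, h3⟩
    have hL : i < l.length := by omega
    refine ⟨by omega, ⟨⟨h1, by omega⟩, ?_⟩⟩
    rwa [Nat.mod_eq_of_lt hL]
  · rintro ⟨hne, ⟨⟨h1, h2⟩, h3⟩⟩
    have hL : i < l.length := by omega
    rw [Nat.mod_eq_of_lt hL] at h3
    exact ⟨⟨h1, by omega⟩, h3⟩

lemma sorted_des_empty {l : List ℕ} (h : l.Pairwise (· < ·)) : Des l = ∅ := by
  rw [Finset.eq_empty_iff_forall_notMem]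
  intro i hi
  have h1 : 1 ≤ i := (mem_Des'.1 hi).1.1
  have h2 : i < l.length := by
    have h3 := (mem_Des'.1 hi).1.2
    have : l.length ≠ 0 := by
      intro h0
      rw [h0] at h3
      omega
    omega
  rw [mem_Des_getElem h1 h2] at hi
  have := List.pairwise_iff_getElem.1 h (i-1) i (by omega) h2 (by omega)
  omega

lemma des_empty_sorted {l : List ℕ} (hd : l.Nodup) (h : Des l = ∅) : l.Pairwise (· < ·) := by
  rw [← List.isChain_iff_pairwise, List.isChain_iff_getElem]
  intro i hi
  have hmem : i + 1 ∉ Des l := by rw [h]; exact Finset.notMem_empty _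
  rw [mem_Des_getElem (by omega) (by omega)] at hmem
  simp only [Nat.add_sub_cancel] at hmem
  have hne : l[i] ≠ l[i+1] := by
    intro he
    have := (List.Nodup.getElem_inj_iff hd).1 he
    omega
  omega

lemma sublist_of_sorted_subset : ∀ (y x : List ℕ), x.Pairwise (· < ·) → y.Pairwise (· < ·) →
    (∀ a ∈ x, a ∈ y) → x.Sublist y := by
  intro y
  induction y with
  | nil =>
    intro x _ _ hsub
    cases x with
    | nil => simp
    | cons a t => exact absurd (hsub a (by simp)) (by simp)
  | cons b yt ih =>
    intro x hx hy hsub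
    cases x with
    | nil => simp
    | cons a xt =>
      by_cases hab : a = b
      · subst hab
        refine List.Sublist.cons₂ a (ih xt (List.pairwise_cons.1 hx).2 (List.pairwise_cons.1 hy).2 ?_)
        intro c hc
        have hac : a < c := (List.pairwise_cons.1 hx).1 c hc
        have : c ∈ a :: yt := hsub c (List.mem_cons_of_mem _ hc)
        rcases List.mem_cons.1 this with h | h
        · omega
        · exact h
      · have hay : a ∈ b :: yt := hsub a (by simp)
        have hain : a ∈ yt := by
          rcases List.mem_cons.1 hay with h | h
          · exact absurd h hab
          · exact h
        have hba : b < a := (List.pairwise_cons.1 hy).1 a hain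
        refine List.Sublist.cons b (ih (a :: xt) hx (List.pairwise_cons.1 hy).2 ?_)
        intro c hc
        have hcy : c ∈ b :: yt := hsub c hc
        have hac : a ≤ c := by
          rcases List.mem_cons.1 hc with h | h
          · omega
          · have := (List.pairwise_cons.1 hx).1 c h; omega
        rcases List.mem_cons.1 hcy with h | h
        · omega
        · exact h

lemma sorted_eq_of_mem_iff {x y : List ℕ} (hx : x.Pairwise (· < ·)) (hy : y.Pairwise (· < ·))
    (h : ∀ a, a ∈ x ↔ a ∈ y) : x = y :=
  List.Sublist.antisymm
    (sublist_of_sorted_subset y x hx hy (fun a ha => (h a).1 ha))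
    (sublist_of_sorted_subset x y hy hx (fun a ha => (h a).2 ha))

def dropF (X : Finset ℕ) (d : ℕ) : Finset ℕ := (X.filter (fun i => d < i)).image (fun i => i - d)

lemma mem_dropF {X : Finset ℕ} {d j : ℕ} : j ∈ dropF X d ↔ ∃ i ∈ X, d < i ∧ i - d = j := by
  simp only [dropF, Finset.mem_image, Finset.mem_filter]
  tauto

lemma mem_Des_append_left {B R : List ℕ} {i : ℕ} (h2 : i < B.length) :
    i ∈ Des (B ++ R) ↔ i ∈ Des B := by
  rcases Nat.eq_zero_or_pos i with h1 | h1
  · subst h1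
    constructor <;> (intro h; exact absurd (mem_Des'.1 h).1.1 (by omega))
  · rw [mem_Des_getElem h1 (by simp; omega), mem_Des_getElem h1 h2,
      List.getElem_append_left (show i - 1 < B.length by omega) (h' := by simp; omega),
      List.getElem_append_left h2 (h' := by simp; omega)]

lemma mem_Des_append_right {B R : List ℕ} {j : ℕ} (h1 : 1 ≤ j) :
    j + B.length ∈ Des (B ++ R) ↔ j ∈ Des R := by
  by_cases h2 : j < R.length
  · rw [mem_Des_getElem (by omega) (by simp; omega), mem_Des_getElem h1 h2]
    rw [List.getElem_append_right (show B.length ≤ j + B.length by omega),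
      List.getElem_append_right (show B.length ≤ j + B.length - 1 by omega)]
    simp only [show j + B.length - B.length = j from by omega,
      show j + B.length - 1 - B.length = j - 1 from by omega]
  · constructor <;> intro h
    · have := (mem_Des'.1 h).1.2
      rw [List.length_append] at this
      omega
    · have := (mem_Des'.1 h).1.2
      omega

lemma Des_nil : Des ([] : List ℕ) = ∅ := by
  rw [Finset.eq_empty_iff_forall_notMem]
  intro i hi
  have := (mem_Des'.1 hi).1
  simp at this
  omega

lemma Des_drop {l : List ℕ} {d : ℕ} :
    Des (l.drop d) = dropF (Des l) d := by
  by_cases hd : d ≤ l.length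
  · ext j
    rw [mem_dropF]
    have hsplit : l = l.take d ++ l.drop d := (List.take_append_drop d l).symm
    have hlen : (l.take d).length = d := by simp [Nat.min_eq_left hd]
    constructor
    · intro hj
      have h1 : 1 ≤ j := (mem_Des'.1 hj).1.1
      refine ⟨j + d, ?_, by omega, by omega⟩
      have h2 : j + (l.take d).length ∈ Des (l.take d ++ l.drop d) :=
        (mem_Des_append_right h1).2 hj
      rw [hlen] at h2
      rwa [← hsplit] at h2
    · rintro ⟨i, hi, hdi, rfl⟩
      have h1 : 1 ≤ i - d := by omega
      have h2 : i - d + (l.take d).length ∈ Des (l.take d ++ l.drop d) := by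
        rw [← hsplit, hlen]
        have : i - d + d = i := by omega
        rw [this]
        exact hi
      exact (mem_Des_append_right h1).1 h2
  · push_neg at hd
    rw [List.drop_eq_nil_of_le (by omega), Des_nil, eq_comm,
      Finset.eq_empty_iff_forall_notMem]
    intro j hj
    rcases mem_dropF.1 hj with ⟨i, hi, hdi, rfl⟩
    have := (mem_Des'.1 hi).1
    omega

lemma mem_Des_take {l : List ℕ} {d i : ℕ} (h1 : 1 ≤ i) (hid : i < d) :
    i ∈ Des (l.take d) ↔ i ∈ Des l := by
  by_cases h2 : i < l.length
  · rw [mem_Des_getElem h1 (by simp; omega), mem_Des_getElem h1 h2]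
    rw [List.getElem_take, List.getElem_take]
  · constructor <;> intro h
    · have := (mem_Des'.1 h).1.2
      simp at this
      omega
    · have := (mem_Des'.1 h).1.2
      omega

lemma take_sorted_iff_des {l : List ℕ} (hd : l.Nodup) (d : ℕ) :
    (l.take d).Pairwise (· < ·) ↔ Des l ∩ Finset.Icc 1 (d-1) = ∅ := by
  constructor
  · intro h
    rw [Finset.eq_empty_iff_forall_notMem]
    intro i hi
    rw [Finset.mem_inter, Finset.mem_Icc] at hi
    obtain ⟨hiD, h1, h2⟩ := hi
    have hd1 : 1 ≤ d := by omega
    have h3 : i ∈ Des (l.take d) := (mem_Des_take h1 (by omega)).2 hiD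
    rw [sorted_des_empty h] at h3
    exact Finset.notMem_empty _ h3
  · intro h
    have hnd : (l.take d).Nodup := (List.take_sublist d l).nodup hd
    apply des_empty_sorted hnd
    rw [Finset.eq_empty_iff_forall_notMem]
    intro i hi
    have hb := (mem_Des'.1 hi).1
    have hlen : (l.take d).length ≤ d := by simp
    have h1 : 1 ≤ i := hb.1
    have hb2 := hb.2
    have hid : i < d := by omega
    have h3 : i ∈ Des l := (mem_Des_take h1 hid).1 hi
    have h4 : i ∈ Des l ∩ Finset.Icc 1 (d-1) :=
      Finset.mem_inter.2 ⟨h3, Finset.mem_Icc.2 ⟨h1, by omega⟩⟩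
    rw [h] at h4
    exact Finset.notMem_empty _ h4

/- ===== rotation lemmas ===== -/

lemma getD_rotate {l : List ℕ} {r k : ℕ} (h : k < l.length) :
    (l.rotate r).getD k 0 = l.getD ((k + r) % l.length) 0 := by
  have h1 : k < (l.rotate r).length := by simpa using h
  have h2 : (k + r) % l.length < l.length := Nat.mod_lt _ (by omega)
  rw [List.getD_eq_getElem _ _ h1, List.getD_eq_getElem _ _ h2]
  exact List.getElem_rotate l r k h1

lemma rotate_inj_of_nodup {l : List ℕ} (hd : l.Nodup) {i j : ℕ} (hi : i < l.length)
    (hj : j < l.length) (h : l.rotate i = l.rotate j) : i = j := by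
  have h0 : 0 < l.length := by omega
  have hg : (l.rotate i).getD 0 0 = (l.rotate j).getD 0 0 := by rw [h]
  rw [getD_rotate h0, getD_rotate h0] at hg
  simp only [Nat.zero_add] at hg
  rw [Nat.mod_eq_of_lt hi, Nat.mod_eq_of_lt hj] at hg
  rw [List.getD_eq_getElem _ _ hi, List.getD_eq_getElem _ _ hj] at hg
  exact (List.Nodup.getElem_inj_iff hd).1 hg

/-- cyclic shift map on positions -/
def decP (L : ℕ) : ℕ → ℕ := fun i => if i = 1 then L else i - 1

def decI (L : ℕ) (S : Finset ℕ) : Finset ℕ := S.image (decP L)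

lemma decP_mem {L i : ℕ} (h : i ∈ Finset.Icc 1 L) : decP L i ∈ Finset.Icc 1 L := by
  rw [Finset.mem_Icc] at *
  unfold decP
  split <;> omega

lemma decP_injOn {L : ℕ} {i j : ℕ} (hi : i ∈ Finset.Icc 1 L) (hj : j ∈ Finset.Icc 1 L)
    (h : decP L i = decP L j) : i = j := by
  rw [Finset.mem_Icc] at hi hj
  unfold decP at h
  split at h <;> split at h <;> omega

lemma decI_subset {L : ℕ} {S : Finset ℕ} (h : S ⊆ Finset.Icc 1 L) :
    decI L S ⊆ Finset.Icc 1 L := by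
  intro j hj
  rcases Finset.mem_image.1 hj with ⟨i, hi, rfl⟩
  exact decP_mem (h hi)

lemma decI_inj {L : ℕ} {S S' : Finset ℕ} (hS : S ⊆ Finset.Icc 1 L) (hS' : S' ⊆ Finset.Icc 1 L)
    (h : decI L S = decI L S') : S = S' := by
  ext i
  constructor
  · intro hi
    have : decP L i ∈ decI L S' := by rw [← h]; exact Finset.mem_image_of_mem _ hi
    rcases Finset.mem_image.1 this with ⟨j, hj, hji⟩
    rwa [decP_injOn (hS' hj) (hS hi) hji] at hj
  · intro hi
    have : decP L i ∈ decI L S := by rw [h]; exact Finset.mem_image_of_mem _ hi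
    rcases Finset.mem_image.1 this with ⟨j, hj, hji⟩
    rwa [decP_injOn (hS hj) (hS' hi) hji] at hj

lemma decI_card {L : ℕ} {S : Finset ℕ} (hS : S ⊆ Finset.Icc 1 L) :
    (decI L S).card = S.card :=
  Finset.card_image_of_injOn (fun i hi j hj h => decP_injOn (hS hi) (hS hj) h)

lemma cDes_rotate_one {l : List ℕ} (hL : 1 ≤ l.length) :
    cDes (l.rotate 1) = decI l.length (cDes l) := by
  ext j
  simp only [decI, Finset.mem_image]
  constructor
  · intro hj
    obtain ⟨⟨hj1, hj2⟩, hlt⟩ := mem_cDes'.1 hj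
    rw [List.length_rotate] at hj2 hlt
    rw [getD_rotate (Nat.mod_lt _ (by omega)), getD_rotate (by omega : j - 1 < l.length)] at hlt
    by_cases hjL : j = l.length
    · subst hjL
      refine ⟨1, ?_, by simp [decP]⟩
      rw [mem_cDes']
      rw [Nat.mod_self] at hlt
      rw [show l.length - 1 + 1 = l.length by omega, Nat.mod_self] at hlt
      simp only [Nat.zero_add] at hlt
      exact ⟨⟨le_refl 1, hL⟩, by simpa using hlt⟩
    · have hjlt : j < l.length := by omega
      refine ⟨j + 1, ?_, by simp only [decP, if_neg (by omega : ¬ j + 1 = 1)]; omega⟩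
      rw [mem_cDes']
      rw [Nat.mod_eq_of_lt hjlt, show j - 1 + 1 = j by omega, Nat.mod_eq_of_lt hjlt] at hlt
      exact ⟨⟨by omega, by omega⟩, by rw [show j + 1 - 1 = j by omega]; exact hlt⟩
  · rintro ⟨i, hi, rfl⟩
    obtain ⟨⟨hi1, hi2⟩, hlt⟩ := mem_cDes'.1 hi
    rw [mem_cDes', List.length_rotate]
    by_cases hi1' : i = 1
    · subst hi1'
      have hd : decP l.length 1 = l.length := by simp [decP]
      rw [hd, Nat.mod_self]
      refine ⟨⟨hL, le_refl _⟩, ?_⟩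
      rw [getD_rotate (by omega : 0 < l.length), getD_rotate (by omega : l.length - 1 < l.length)]
      rw [show l.length - 1 + 1 = l.length by omega, Nat.mod_self]
      simpa using hlt
    · have hd : decP l.length i = i - 1 := by simp [decP, hi1']
      rw [hd]
      have hilt : i - 1 < l.length := by omega
      refine ⟨⟨by omega, by omega⟩, ?_⟩
      rw [Nat.mod_eq_of_lt hilt]
      rw [getD_rotate hilt, getD_rotate (by omega : i - 1 - 1 < l.length)]
      rw [show i - 1 + 1 = i by omega, show i - 1 - 1 + 1 = i - 1 by omega,
        Nat.mod_eq_of_lt (by omega : i - 1 < l.length)]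
      exact hlt

lemma cDes_rotate_iter {l : List ℕ} (hL : 1 ≤ l.length) (r : ℕ) :
    cDes (l.rotate r) = (decI l.length)^[r] (cDes l) := by
  induction r with
  | zero => simp
  | succ r ih =>
    have h1 : l.rotate (r + 1) = (l.rotate r).rotate 1 := by
      rw [List.rotate_rotate, Nat.add_comm]
    rw [h1, cDes_rotate_one (by simpa using hL), List.length_rotate, ih,
      Function.iterate_succ_apply']

lemma cDes_nonempty {l : List ℕ} (hd : l.Nodup) (hL : 2 ≤ l.length) : cDes l ≠ ∅ := by
  intro h
  set L := l.length with hLdef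
  have hmono : ∀ k, k < L → l.getD 0 0 ≤ l.getD k 0 := by
    intro k
    induction k with
    | zero => intro _; exact le_refl _
    | succ k ih =>
      intro hk
      have h1 : (k+1) ∉ cDes l := by rw [h]; exact Finset.notMem_empty _
      rw [mem_cDes'] at h1
      push_neg at h1
      have h2 := h1 ⟨by omega, by omega⟩
      rw [Nat.mod_eq_of_lt (by omega : k + 1 < L)] at h2
      simp only [Nat.add_sub_cancel] at h2
      exact le_trans (ih (by omega)) h2
  have hwrap : L ∉ cDes l := by rw [h]; exact Finset.notMem_empty _
  rw [mem_cDes'] at hwrap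
  push_neg at hwrap
  have h2 := hwrap ⟨by omega, le_refl _⟩
  rw [Nat.mod_self] at h2
  have h3 := hmono (L-1) (by omega)
  have h4 := hmono 1 (by omega)
  -- l.getD 0 ≤ l.getD 1 ≤ ... and l.getD (L-1) ≤ l.getD 0 : need getD 1 ≤ getD (L-1)
  have hmono2 : ∀ j k, j ≤ k → k < L → l.getD j 0 ≤ l.getD k 0 := by
    intro j k
    induction k with
    | zero => intro hj _; interval_cases j; exact le_refl _
    | succ k ih =>
      intro hj hk
      rcases Nat.eq_or_lt_of_le hj with he | hlt
      · rw [he]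
      · have h1 : (k+1) ∉ cDes l := by rw [h]; exact Finset.notMem_empty _
        rw [mem_cDes'] at h1
        push_neg at h1
        have h2 := h1 ⟨by omega, by omega⟩
        rw [Nat.mod_eq_of_lt (by omega : k + 1 < L)] at h2
        simp only [Nat.add_sub_cancel] at h2
        exact le_trans (ih (by omega) (by omega)) h2
  have h5 := hmono2 1 (L-1) (by omega) (by omega)
  have heq : l.getD 0 0 = l.getD 1 0 := by omega
  rw [List.getD_eq_getElem _ _ (by omega : 0 < l.length),
    List.getD_eq_getElem _ _ (by omega : 1 < l.length)] at heq
  have := (List.Nodup.getElem_inj_iff hd).1 heq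
  omega

/- ===== cycStat rotation invariance ===== -/

lemma mod_shift_helper {L k x : ℕ} (hL : 0 < L) (hx : x < L) :
    (x + k) % L = if x + k % L < L then x + k % L else x + k % L - L := by
  have hk : k % L < L := Nat.mod_lt _ hL
  rw [Nat.add_mod, Nat.mod_eq_of_lt hx]
  split
  · exact Nat.mod_eq_of_lt (by omega)
  · rw [Nat.mod_eq_sub_mod (by omega)]
    exact Nat.mod_eq_of_lt (by omega)

lemma range_image_add_mod {L k : ℕ} (hL : 0 < L) :
    (Finset.range L).image (fun i => (i + k) % L) = Finset.range L := by
  apply Finset.eq_of_subset_of_card_le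
  · intro j hj
    rcases Finset.mem_image.1 hj with ⟨i, _, rfl⟩
    exact Finset.mem_range.2 (Nat.mod_lt _ hL)
  · rw [Finset.card_image_of_injOn, Finset.card_range]
    intro a ha b hb hab
    rw [Finset.coe_range, Set.mem_Iio] at ha hb
    have hab' : (a + k) % L = (b + k) % L := hab
    rw [mod_shift_helper hL ha, mod_shift_helper hL hb] at hab'
    have hk : k % L < L := Nat.mod_lt _ hL
    split_ifs at hab' <;> omega

lemma multiset_range_map_shift {A : Type*} {L k : ℕ} (hL : 0 < L) (f : ℕ → A) :
    (Multiset.range L).map (fun i => f ((i + k) % L)) = (Multiset.range L).map f := by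
  have h1 : (Multiset.range L).map (fun i => f ((i + k) % L))
      = Multiset.map f ((Multiset.range L).map (fun i => (i + k) % L)) := by
    rw [Multiset.map_map]
    rfl
  have h2 : (Multiset.range L).map (fun i => (i + k) % L) = Multiset.range L := by
    have hinj : Set.InjOn (fun i => (i + k) % L) ↑(Finset.range L) := by
      intro a ha b hb hab
      rw [Finset.coe_range, Set.mem_Iio] at ha hb
      have hab' : (a + k) % L = (b + k) % L := hab
      rw [mod_shift_helper hL ha, mod_shift_helper hL hb] at hab'
      have hk : k % L < L := Nat.mod_lt _ hL
      split_ifs at hab' <;> omega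
    have h3 := Finset.image_val_of_injOn hinj
    rw [Finset.range_val] at h3
    rw [← h3, range_image_add_mod hL, Finset.range_val]
  rw [h1, h2]

lemma cycStat_rotate {A : Type*} (st : List ℕ → A) (l : List ℕ) (k : ℕ) :
    cycStat st (l.rotate k) = cycStat st l := by
  unfold cycStat
  rw [List.length_rotate]
  rcases Nat.eq_zero_or_pos l.length with hL | hL
  · rw [List.length_eq_zero_iff.1 hL]
    simp
  · have h1 : ((Multiset.range l.length).map fun i => st ((l.rotate k).rotate i))
        = (Multiset.range l.length).map (fun i => st (l.rotate ((i + k) % l.length))) := by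
      apply Multiset.map_congr rfl
      intro i _
      rw [List.rotate_rotate, List.rotate_mod, Nat.add_comm]
    rw [h1]
    exact multiset_range_map_shift hL (fun t => st (l.rotate t))

lemma cycStat_cDes_formula {l : List ℕ} (hL : 1 ≤ l.length) :
    cycStat cDes l = (Multiset.range l.length).map (fun r => (decI l.length)^[r] (cDes l)) := by
  unfold cycStat
  apply Multiset.map_congr rfl
  intro r _
  exact cDes_rotate_iter hL r

/- ===== shuffles ===== -/

def SH (α β : List ℕ) : Finset (List ℕ) :=
  ((α ++ β).permutations.toFinset).filter (fun τ => α.Sublist τ ∧ β.Sublist τ)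

lemma mem_SH {α β τ : List ℕ} :
    τ ∈ SH α β ↔ τ.Perm (α ++ β) ∧ α.Sublist τ ∧ β.Sublist τ := by
  simp [SH, Finset.mem_filter, List.mem_toFinset, List.mem_permutations]

lemma SH_length {α β τ : List ℕ} (h : τ ∈ SH α β) : τ.length = α.length + β.length := by
  have := (mem_SH.1 h).1.length_eq
  simpa using this

lemma SH_nodup {α β τ : List ℕ} (hd : (α ++ β).Nodup) (h : τ ∈ SH α β) : τ.Nodup :=
  ((mem_SH.1 h).1.nodup_iff).2 hd

lemma isShuffle_iff_mem_SH {α β τ : List ℕ} (hd : (α ++ β).Nodup) :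
    IsShuffle α β τ ↔ τ ∈ SH α β := by
  constructor
  · rintro ⟨hsa, hsb, hlen⟩
    rw [mem_SH]
    have hsub : (α ++ β) ⊆ τ := by
      intro x hx
      rcases List.mem_append.1 hx with h | h
      · exact hsa.subset h
      · exact hsb.subset h
    have hsp : (α ++ β).Subperm τ := hd.subperm hsub
    have hperm : (α ++ β).Perm τ := hsp.perm_of_length_le (by simp [hlen])
    exact ⟨hperm.symm, hsa, hsb⟩
  · intro h
    obtain ⟨hperm, hsa, hsb⟩ := mem_SH.1 h
    exact ⟨hsa, hsb, by simpa using hperm.length_eq⟩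

lemma SH_filter_eq {α β τ : List ℕ} (hd : (α ++ β).Nodup) (hτ : τ ∈ SH α β) (p : ℕ → Bool)
    (hp1 : ∀ x ∈ α, p x = true) (hp2 : ∀ x ∈ β, ¬ p x = true) : τ.filter p = α := by
  obtain ⟨hperm, hsa, hsb⟩ := mem_SH.1 hτ
  have h1 : α.filter p = α := List.filter_eq_self.2 hp1
  have h2 : β.filter p = [] := by
    rw [List.filter_eq_nil_iff]
    exact hp2
  have h3 : α.Sublist (τ.filter p) := by
    have := hsa.filter p
    rwa [h1] at this
  have h4 : (τ.filter p).length = α.length := by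
    have h5 : (τ.filter p).Perm ((α ++ β).filter p) := hperm.filter p
    rw [List.filter_append, h1, h2, List.append_nil] at h5
    exact h5.length_eq
  exact (h3.eq_of_length h4.symm).symm

lemma nodup_rotate_append {π σ : List ℕ} (hd : (π ++ σ).Nodup) (i j : ℕ) :
    ((π.rotate i) ++ (σ.rotate j)).Nodup := by
  rw [List.nodup_append'] at hd ⊢
  obtain ⟨h1, h2, h3⟩ := hd
  refine ⟨(List.rotate_perm π i).nodup_iff.2 h1, (List.rotate_perm σ j).nodup_iff.2 h2, ?_⟩
  intro a ha hb
  exact h3 ((List.rotate_perm π i).subset ha) ((List.rotate_perm σ j).subset hb)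

lemma rotate_one_cons (t : ℕ) (l : List ℕ) : (t :: l).rotate 1 = l ++ [t] := by
  rw [show (1 : ℕ) = 0 + 1 from rfl, List.rotate_cons_succ, List.rotate_zero]

lemma SH_rotate_one {α β τ : List ℕ} (hd : (α ++ β).Nodup) (hτ : τ ∈ SH α β)
    (hlen : 0 < τ.length) :
    τ.rotate 1 ∈ SH (α.rotate 1) β ∨ τ.rotate 1 ∈ SH α (β.rotate 1) := by
  obtain ⟨hperm, hsa, hsb⟩ := mem_SH.1 hτ
  rw [List.nodup_append'] at hd
  obtain ⟨hdα, hdβ, hdis⟩ := hd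
  cases τ with
  | nil => simp at hlen
  | cons t τ' =>
    have hrot : (t :: τ').rotate 1 = τ' ++ [t] := rotate_one_cons t τ'
    have ht : t ∈ α ++ β := hperm.subset (by simp)
    have hnodup : (t :: τ').Nodup :=
      hperm.nodup_iff.2 (by rw [List.nodup_append']; exact ⟨hdα, hdβ, hdis⟩)
    have htn : t ∉ τ' := (List.nodup_cons.1 hnodup).1
    rcases List.mem_append.1 ht with htα | htβ
    · left
      rcases List.sublist_cons_iff.1 hsa with h | ⟨α', hαeq, hα'⟩
      · exact absurd (h.subset htα) htn
      · subst hαeq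
        rw [mem_SH, hrot, rotate_one_cons t α']
        have hp1 : (τ' ++ [t]).Perm (t :: τ') := List.perm_append_singleton t τ'
        have hp2 : (t :: τ').Perm ((t :: α') ++ β) := hperm
        have hp3 : ((t :: α') ++ β).Perm ((α' ++ [t]) ++ β) :=
          List.Perm.append_right β (List.perm_append_singleton t α').symm
        refine ⟨(hp1.trans hp2).trans hp3, hα'.append (List.Sublist.refl [t]), ?_⟩
        have hβτ' : β.Sublist τ' := by
          rcases List.sublist_cons_iff.1 hsb with h | ⟨β', hβeq, _⟩
          · exact h
          · exact absurd (hdis (by simp) : t ∉ β) (fun _ => by rw [hβeq] at *; simp_all)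
        exact hβτ'.trans (List.sublist_append_left τ' [t])
    · right
      rcases List.sublist_cons_iff.1 hsb with h | ⟨β', hβeq, hβ'⟩
      · exact absurd (h.subset htβ) htn
      · subst hβeq
        rw [mem_SH, hrot, rotate_one_cons t β']
        have hp1 : (τ' ++ [t]).Perm (t :: τ') := List.perm_append_singleton t τ'
        have hp2 : (t :: τ').Perm (α ++ (t :: β')) := hperm
        have hp3 : (α ++ (t :: β')).Perm (α ++ (β' ++ [t])) :=
          List.Perm.append_left α (List.perm_append_singleton t β').symm
        refine ⟨(hp1.trans hp2).trans hp3, ?_, hβ'.append (List.Sublist.refl [t])⟩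
        have hατ' : α.Sublist τ' := by
          rcases List.sublist_cons_iff.1 hsa with h | ⟨α', hαeq, _⟩
          · exact h
          · exfalso
            have htA : t ∈ α := by rw [hαeq]; simp
            exact hdis htA htβ
        exact hατ'.trans (List.sublist_append_left τ' [t])

/- ===== the big linear set of shuffles of rotations ===== -/

def TT (π σ : List ℕ) : Finset (List ℕ) :=
  (Finset.range π.length ×ˢ Finset.range σ.length).biUnion
    (fun p => SH (π.rotate p.1) (σ.rotate p.2))

lemma mem_TT {π σ τ : List ℕ} :
    τ ∈ TT π σ ↔ ∃ i < π.length, ∃ j < σ.length, τ ∈ SH (π.rotate i) (σ.rotate j) := by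
  simp only [TT, Finset.mem_biUnion, Finset.mem_product, Finset.mem_range]
  constructor
  · rintro ⟨⟨i, j⟩, ⟨hi, hj⟩, h⟩
    exact ⟨i, hi, j, hj, h⟩
  · rintro ⟨i, hi, j, hj, h⟩
    exact ⟨⟨i, j⟩, ⟨hi, hj⟩, h⟩

lemma TT_rotate_one {π σ τ : List ℕ} (hd : (π ++ σ).Nodup) (hn : 0 < π.length)
    (hm : 0 < σ.length) (hτ : τ ∈ TT π σ) : τ.rotate 1 ∈ TT π σ := by
  rcases mem_TT.1 hτ with ⟨i, hi, j, hj, h⟩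
  have hlen : 0 < τ.length := by
    rw [SH_length h]
    simp only [List.length_rotate]
    omega
  rcases SH_rotate_one (nodup_rotate_append hd i j) h hlen with h1 | h1
  · rw [List.rotate_rotate] at h1
    rw [← List.rotate_mod π (i+1)] at h1
    exact mem_TT.2 ⟨(i+1) % π.length, Nat.mod_lt _ hn, j, hj, h1⟩
  · rw [List.rotate_rotate] at h1
    rw [← List.rotate_mod σ (j+1)] at h1
    exact mem_TT.2 ⟨i, hi, (j+1) % σ.length, Nat.mod_lt _ hm, h1⟩

lemma TT_rotate {π σ τ : List ℕ} (hd : (π ++ σ).Nodup) (hn : 0 < π.length)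
    (hm : 0 < σ.length) (hτ : τ ∈ TT π σ) (k : ℕ) : τ.rotate k ∈ TT π σ := by
  induction k with
  | zero => simpa using hτ
  | succ k ih =>
    have : τ.rotate (k + 1) = (τ.rotate k).rotate 1 := by
      rw [List.rotate_rotate]
    rw [this]
    exact TT_rotate_one hd hn hm ih

lemma TT_length {π σ τ : List ℕ} (hτ : τ ∈ TT π σ) : τ.length = π.length + σ.length := by
  rcases mem_TT.1 hτ with ⟨i, _, j, _, h⟩
  rw [SH_length h]
  simp

lemma TT_nodup {π σ τ : List ℕ} (hd : (π ++ σ).Nodup) (hτ : τ ∈ TT π σ) : τ.Nodup := by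
  rcases mem_TT.1 hτ with ⟨i, _, j, _, h⟩
  exact SH_nodup (nodup_rotate_append hd i j) h

/- ===== unique decomposition / disjointness ===== -/

lemma SH_disjoint {π σ : List ℕ} (hd : (π ++ σ).Nodup) {i j i' j' : ℕ}
    (hi : i < π.length) (hj : j < σ.length) (hi' : i' < π.length) (hj' : j' < σ.length)
    (hne : (i, j) ≠ (i', j')) :
    Disjoint (SH (π.rotate i) (σ.rotate j)) (SH (π.rotate i') (σ.rotate j')) := by
  rw [Finset.disjoint_left]
  intro τ h1 h2
  apply hne
  have hdis : π.Disjoint σ := (List.nodup_append'.1 hd).2.2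
  have hdπ : π.Nodup := (List.nodup_append'.1 hd).1
  have hdσ : σ.Nodup := (List.nodup_append'.1 hd).2.1
  have key : ∀ i'' j'', i'' < π.length → j'' < σ.length →
      τ ∈ SH (π.rotate i'') (σ.rotate j'') →
      τ.filter (fun x => decide (x ∈ π)) = π.rotate i''
      ∧ τ.filter (fun x => decide (x ∈ σ)) = σ.rotate j'' := by
    intro i'' j'' _ _ h
    have hd1 := nodup_rotate_append hd i'' j''
    constructor
    · apply SH_filter_eq hd1 h
      · intro x hx
        simp only [decide_eq_true_eq]
        exact (List.rotate_perm π i'').subset hx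
      · intro x hx
        simp only [decide_eq_true_eq]
        intro hxπ
        exact hdis hxπ ((List.rotate_perm σ j'').subset hx)
    · have h' : τ ∈ SH (σ.rotate j'') (π.rotate i'') := by
        rw [mem_SH] at h ⊢
        exact ⟨h.1.trans List.perm_append_comm, h.2.2, h.2.1⟩
      have hd2 : ((σ.rotate j'') ++ (π.rotate i'')).Nodup := by
        apply nodup_rotate_append _ j'' i''
        rw [List.nodup_append'] at hd ⊢
        exact ⟨hd.2.1, hd.1, fun a ha hb => hd.2.2 hb ha⟩
      apply SH_filter_eq hd2 h'
      · intro x hx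
        simp only [decide_eq_true_eq]
        exact (List.rotate_perm σ j'').subset hx
      · intro x hx
        simp only [decide_eq_true_eq]
        intro hxσ
        exact hdis ((List.rotate_perm π i'').subset hx) hxσ
  obtain ⟨e1, e2⟩ := key i j hi hj h1
  obtain ⟨e1', e2'⟩ := key i' j' hi' hj' h2
  have hππ : π.rotate i = π.rotate i' := by rw [← e1, ← e1']
  have hσσ : σ.rotate j = σ.rotate j' := by rw [← e2, ← e2']
  have : i = i' := rotate_inj_of_nodup hdπ hi hi' hππ
  have : j = j' := rotate_inj_of_nodup hdσ hj hj' hσσ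
  simp_all

lemma TT_filter_card {π σ : List ℕ} (hd : (π ++ σ).Nodup) (P : List ℕ → Prop)
    [DecidablePred P] :
    ((TT π σ).filter P).card
      = ∑ p ∈ Finset.range π.length ×ˢ Finset.range σ.length,
          ((SH (π.rotate p.1) (σ.rotate p.2)).filter P).card := by
  rw [TT, Finset.filter_biUnion, Finset.card_biUnion]
  intro p hp q hq hne
  rw [Finset.mem_coe, Finset.mem_product, Finset.mem_range, Finset.mem_range] at hp hq
  apply Finset.disjoint_filter_filter
  have : (p.1, p.2) ≠ (q.1, q.2) := by
    intro h
    apply hne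
    rw [← Prod.mk.eta (p := p), ← Prod.mk.eta (p := q), h]
  exact SH_disjoint hd hp.1 hp.2 hq.1 hq.2 this

/- ===== the recursive counting function ===== -/

def blockL (L : ℕ) (T : Finset ℕ) : ℕ :=
  if h : (T ∩ Finset.Icc 1 (L - 1)).Nonempty then (T ∩ Finset.Icc 1 (L - 1)).min' h else L

lemma blockL_pos {L : ℕ} (hL : 1 ≤ L) (T : Finset ℕ) : 1 ≤ blockL L T := by
  unfold blockL
  split
  · have := Finset.min'_mem _ ‹(T ∩ Finset.Icc 1 (L - 1)).Nonempty›
    rw [Finset.mem_inter, Finset.mem_Icc] at this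
    omega
  · omega

lemma blockL_le {L : ℕ} (hL : 1 ≤ L) (T : Finset ℕ) : blockL L T ≤ L := by
  unfold blockL
  split
  · have := Finset.min'_mem _ ‹(T ∩ Finset.Icc 1 (L - 1)).Nonempty›
    rw [Finset.mem_inter, Finset.mem_Icc] at this
    omega
  · omega

lemma blockL_min {L i : ℕ} {T : Finset ℕ} (h : i ∈ T) (h1 : 1 ≤ i) (h2 : i ≤ L - 1) :
    blockL L T ≤ i := by
  unfold blockL
  split
  · exact Finset.min'_le _ _ (Finset.mem_inter.2 ⟨h, Finset.mem_Icc.2 ⟨h1, h2⟩⟩)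
  · exfalso
    exact ‹¬ (T ∩ Finset.Icc 1 (L - 1)).Nonempty›
      ⟨i, Finset.mem_inter.2 ⟨h, Finset.mem_Icc.2 ⟨h1, h2⟩⟩⟩

lemma blockL_mem {L : ℕ} {T : Finset ℕ} (h : blockL L T ≠ L) : blockL L T ∈ T := by
  unfold blockL at *
  split at h
  · have := Finset.min'_mem _ ‹(T ∩ Finset.Icc 1 (L - 1)).Nonempty›
    rw [dif_pos ‹_›]
    exact (Finset.mem_inter.1 this).1
  · exact absurd rfl h

def NF (n m : ℕ) (A B T : Finset ℕ) : ℕ :=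
  if h0 : n + m = 0 then 1
  else
    ∑ a ∈ Finset.range (blockL (n + m) T + 1),
      if h : a ≤ blockL (n + m) T ∧ a ≤ n ∧ blockL (n + m) T - a ≤ m
           ∧ A ∩ Finset.Icc 1 (a - 1) = ∅
           ∧ B ∩ Finset.Icc 1 (blockL (n + m) T - a - 1) = ∅
      then NF (n - a) (m - (blockL (n + m) T - a)) (dropF A a)
             (dropF B (blockL (n + m) T - a)) (dropF T (blockL (n + m) T))
      else 0
termination_by n + m
decreasing_by
  have h1 : 1 ≤ blockL (n + m) T := blockL_pos (by omega) T
  omega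

def NE (n m : ℕ) (A B : Finset ℕ) (T : Finset ℕ) : ℤ :=
  (NF n m A B T : ℤ) - ∑ R ∈ (T.powerset.erase T).attach, NE n m A B R.1
termination_by T.card
decreasing_by
  have h1 := R.2
  rw [Finset.mem_erase, Finset.mem_powerset] at h1
  exact Finset.card_lt_card (lt_of_le_of_ne h1.2 h1.1)

/- ===== decomposition of a shuffle at a cut ===== -/

lemma dropF_mono {X Y : Finset ℕ} (h : X ⊆ Y) (d : ℕ) : dropF X d ⊆ dropF Y d := by
  intro j hj
  rcases mem_dropF.1 hj with ⟨i, hi, h1, h2⟩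
  exact mem_dropF.2 ⟨i, h hi, h1, h2⟩

lemma filter_split_of_sublists {τ γ δ γ₁ γ₂ : List ℕ} {t : ℕ}
    (hperm : τ.Perm (γ ++ δ)) (hdis : ∀ x ∈ δ, x ∉ γ)
    (hγeq : γ = γ₁ ++ γ₂) (h1 : γ₁.Sublist (τ.take t)) (h2 : γ₂.Sublist (τ.drop t)) :
    (τ.take t).filter (fun x => decide (x ∈ γ)) = γ₁
      ∧ (τ.drop t).filter (fun x => decide (x ∈ γ)) = γ₂ := by
  set p : ℕ → Bool := fun x => decide (x ∈ γ) with hp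
  have hγ₁self : γ₁.filter p = γ₁ :=
    List.filter_eq_self.2 (fun x hx => by
      simp only [hp, decide_eq_true_eq]
      rw [hγeq]; exact List.mem_append_left _ hx)
  have hγ₂self : γ₂.filter p = γ₂ :=
    List.filter_eq_self.2 (fun x hx => by
      simp only [hp, decide_eq_true_eq]
      rw [hγeq]; exact List.mem_append_right _ hx)
  have hs1 : γ₁.Sublist ((τ.take t).filter p) := by
    have := h1.filter p
    rwa [hγ₁self] at this
  have hs2 : γ₂.Sublist ((τ.drop t).filter p) := by
    have := h2.filter p
    rwa [hγ₂self] at this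
  have hγself : γ.filter p = γ :=
    List.filter_eq_self.2 (fun x hx => by simp [hp, hx])
  have hδnil : δ.filter p = [] :=
    List.filter_eq_nil_iff.2 (fun x hx => by simp [hp, hdis x hx])
  have hlen : ((τ.take t).filter p).length + ((τ.drop t).filter p).length = γ.length := by
    rw [← List.length_append, ← List.filter_append, List.take_append_drop]
    have h3 : (τ.filter p).Perm ((γ ++ δ).filter p) := hperm.filter p
    rw [List.filter_append, hγself, hδnil, List.append_nil] at h3
    exact h3.length_eq
  have hγlen : γ.length = γ₁.length + γ₂.length := by
    rw [hγeq, List.length_append]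
  have hl1 : γ₁.length = ((τ.take t).filter p).length := by
    have := hs1.length_le
    have := hs2.length_le
    omega
  have hl2 : γ₂.length = ((τ.drop t).filter p).length := by
    have := hs1.length_le
    have := hs2.length_le
    omega
  exact ⟨(hs1.eq_of_length hl1).symm, (hs2.eq_of_length hl2).symm⟩

lemma shuffle_decomp {α β τ : List ℕ} (hd : (α ++ β).Nodup) (hτ : τ ∈ SH α β) {t : ℕ}
    (ht : t ≤ τ.length) :
    ∃ a b, a + b = t ∧ a ≤ α.length ∧ b ≤ β.length
      ∧ (τ.take t).filter (fun x => decide (x ∈ α)) = α.take a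
      ∧ (τ.take t).filter (fun x => decide (x ∈ β)) = β.take b
      ∧ (α.drop a).Sublist (τ.drop t) ∧ (β.drop b).Sublist (τ.drop t) := by
  obtain ⟨hperm, hsa, hsb⟩ := mem_SH.1 hτ
  obtain ⟨hdα, hdβ, hdis⟩ := List.nodup_append'.1 hd
  have hsa' : α.Sublist (τ.take t ++ τ.drop t) := by
    rw [List.take_append_drop]; exact hsa
  have hsb' : β.Sublist (τ.take t ++ τ.drop t) := by
    rw [List.take_append_drop]; exact hsb
  obtain ⟨α₁, α₂, hαeq, hα₁, hα₂⟩ := List.sublist_append_iff.1 hsa'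
  obtain ⟨β₁, β₂, hβeq, hβ₁, hβ₂⟩ := List.sublist_append_iff.1 hsb'
  have hA := filter_split_of_sublists hperm (fun x hx hx' => hdis hx' hx) hαeq hα₁ hα₂
  have hB := filter_split_of_sublists (hperm.trans List.perm_append_comm)
    (fun x hx hx' => hdis hx hx') hβeq hβ₁ hβ₂
  refine ⟨α₁.length, β₁.length, ?_, ?_, ?_, ?_, ?_, ?_, ?_⟩
  · -- a + b = t
    have htake : (τ.take t).length = t := by
      rw [List.length_take]
      omega
    have hcongr : (τ.take t).filter (fun x => decide (x ∈ β))
        = (τ.take t).filter (fun x => ! decide (x ∈ α)) := by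
      apply List.filter_congr
      intro x hx
      have hxτ : x ∈ τ := List.take_subset t τ hx
      have hxαβ : x ∈ α ++ β := hperm.subset hxτ
      rcases List.mem_append.1 hxαβ with h | h
      · have hnb : x ∉ β := fun hxb => hdis h hxb
        simp [h, hnb]
      · have hna : x ∉ α := fun hxa => hdis hxa h
        simp [h, hna]
    have hpart := (List.filter_append_perm (fun x => decide (x ∈ α)) (τ.take t)).length_eq
    rw [List.length_append] at hpart
    rw [hA.1, ← hcongr, hB.1] at hpart
    omega
  · -- a ≤ α.length
    rw [hαeq, List.length_append]; omega
  · rw [hβeq, List.length_append]; omega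
  · rw [hA.1, hαeq, List.take_left]
  · rw [hB.1, hβeq, List.take_left]
  · have : α.drop α₁.length = α₂ := by rw [hαeq, List.drop_left]
    rw [this]; exact hα₂
  · have : β.drop β₁.length = β₂ := by rw [hβeq, List.drop_left]
    rw [this]; exact hβ₂

lemma fiber_facts {α β τ : List ℕ} {T : Finset ℕ} {t a : ℕ}
    (hd : (α ++ β).Nodup) (hτ : τ ∈ SH α β) (hDes : Des τ ⊆ T)
    (ht1 : 1 ≤ t) (ht2 : t ≤ α.length + β.length)
    (htmin : ∀ i, 1 ≤ i → i < t → i ∉ T)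
    (haOf : ((τ.take t).filter (fun x => decide (x ∈ α))).length = a) :
    a ≤ t ∧ a ≤ α.length ∧ t - a ≤ β.length
    ∧ (τ.take t).filter (fun x => decide (x ∈ α)) = α.take a
    ∧ (τ.take t).filter (fun x => decide (x ∈ β)) = β.take (t - a)
    ∧ (α.drop a).Sublist (τ.drop t) ∧ (β.drop (t - a)).Sublist (τ.drop t)
    ∧ (τ.take t).Pairwise (· < ·)
    ∧ Des α ∩ Finset.Icc 1 (a - 1) = ∅ ∧ Des β ∩ Finset.Icc 1 (t - a - 1) = ∅ := by
  obtain ⟨hdα, hdβ, hdis⟩ := List.nodup_append'.1 hd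
  have hlen : τ.length = α.length + β.length := SH_length hτ
  have hτnd : τ.Nodup := SH_nodup hd hτ
  have hBsorted : (τ.take t).Pairwise (· < ·) := by
    rw [take_sorted_iff_des hτnd]
    rw [Finset.eq_empty_iff_forall_notMem]
    intro i hi
    rw [Finset.mem_inter, Finset.mem_Icc] at hi
    exact htmin i hi.2.1 (by omega) (hDes hi.1)
  obtain ⟨a', b', hab, ha', hb', hfa, hfb, hda, hdb⟩ := shuffle_decomp hd hτ (t := t) (by omega)
  have ha'a : a' = a := by
    rw [hfa, List.length_take] at haOf
    omega
  rw [ha'a] at hab ha' hfa hda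
  have hb'' : b' = t - a := by omega
  rw [hb''] at hb' hfb hdb
  have hsα : (α.take a).Pairwise (· < ·) := by
    rw [← hfa]
    exact List.Pairwise.filter _ hBsorted
  have hsβ : (β.take (t - a)).Pairwise (· < ·) := by
    rw [← hfb]
    exact List.Pairwise.filter _ hBsorted
  exact ⟨by omega, ha', hb', hfa, hfb, hda, hdb, hBsorted,
    (take_sorted_iff_des hdα a).1 hsα, (take_sorted_iff_des hdβ (t - a)).1 hsβ⟩

/- ===== the key linear counting lemma (proved later below) ===== -/

lemma C1 : ∀ (N : ℕ) (α β : List ℕ) (T : Finset ℕ), α.length + β.length = N →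
    (α ++ β).Nodup →
    ((SH α β).filter (fun τ => Des τ ⊆ T)).card = NF α.length β.length (Des α) (Des β) T := by
  intro N
  induction N using Nat.strong_induction_on with
  | _ N ih =>
    intro α β T hN hd
    obtain ⟨hdα, hdβ, hdis⟩ := List.nodup_append'.1 hd
    by_cases h0 : α.length + β.length = 0
    · have hα : α = [] := List.length_eq_zero_iff.1 (by omega)
      have hβ : β = [] := List.length_eq_zero_iff.1 (by omega)
      subst hα hβ
      rw [NF, dif_pos h0]
      have hset : (SH ([] : List ℕ) []).filter (fun τ => Des τ ⊆ T) = {[]} := by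
        ext τ
        rw [Finset.mem_filter, mem_SH, Finset.mem_singleton]
        constructor
        · rintro ⟨⟨hp, _, _⟩, _⟩
          exact List.perm_nil.1 (by simpa using hp)
        · rintro rfl
          exact ⟨⟨by simp, by simp, by simp⟩, by rw [Des_nil]; exact Finset.empty_subset T⟩
      rw [hset, Finset.card_singleton]
    · rw [NF, dif_neg h0]
      set t := blockL (α.length + β.length) T with htdef
      have ht1 : 1 ≤ t := blockL_pos (by omega) T
      have ht2 : t ≤ α.length + β.length := blockL_le (by omega) T
      have htmin : ∀ i, 1 ≤ i → i < t → i ∉ T := by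
        intro i hi1 hi2 hiT
        have := blockL_min hiT hi1 (show i ≤ α.length + β.length - 1 by omega)
        omega
      have htmem : t < α.length + β.length → t ∈ T := by
        intro h
        exact blockL_mem (by omega)
      have hmap : ∀ τ ∈ (SH α β).filter (fun τ => Des τ ⊆ T),
          ((τ.take t).filter (fun x => decide (x ∈ α))).length ∈ Finset.range (t + 1) := by
        intro τ hτ
        rw [Finset.mem_range]
        have h1 := List.length_filter_le (fun x => decide (x ∈ α)) (τ.take t)
        have h2 : (τ.take t).length ≤ t := by rw [List.length_take]; omega
        omega
      rw [Finset.card_eq_sum_card_fiberwise hmap]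
      apply Finset.sum_congr rfl
      intro a ha
      rw [Finset.mem_range] at ha
      by_cases hg : a ≤ t ∧ a ≤ α.length ∧ t - a ≤ β.length
          ∧ Des α ∩ Finset.Icc 1 (a - 1) = ∅ ∧ Des β ∩ Finset.Icc 1 (t - a - 1) = ∅
      · rw [dif_pos hg]
        obtain ⟨hga, hgn, hgm, hgα, hgβ⟩ := hg
        -- apply IH to the drops
        have hlensum : (α.drop a).length + (β.drop (t - a)).length = α.length + β.length - t := by
          rw [List.length_drop, List.length_drop]
          omega
        have hdd : (α.drop a ++ β.drop (t - a)).Nodup := by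
          rw [List.nodup_append']
          exact ⟨(List.drop_sublist a α).nodup hdα, (List.drop_sublist (t - a) β).nodup hdβ,
            fun x hx hx' => hdis (List.drop_subset _ _ hx) (List.drop_subset _ _ hx')⟩
        have hIH := ih (α.length + β.length - t) (by omega) (α.drop a) (β.drop (t - a))
          (dropF T t) hlensum hdd
        rw [List.length_drop, List.length_drop, Des_drop, Des_drop] at hIH
        rw [← hIH]
        -- the bijection with the block structure
        set mrg := Finset.sort ((α.take a).toFinset ∪ (β.take (t - a)).toFinset) (· ≤ ·)
          with hmrgdef
        have hsortα : (α.take a).Pairwise (· < ·) := (take_sorted_iff_des hdα a).2 hgα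
        have hsortβ : (β.take (t - a)).Pairwise (· < ·) := (take_sorted_iff_des hdβ (t - a)).2 hgβ
        have hndta : (α.take a).Nodup := (List.take_sublist a α).nodup hdα
        have hndtb : (β.take (t - a)).Nodup := (List.take_sublist (t - a) β).nodup hdβ
        have hndapp : (α.take a ++ β.take (t - a)).Nodup := by
          rw [List.nodup_append']
          exact ⟨hndta, hndtb,
            fun x hx hx' => hdis (List.take_subset _ _ hx) (List.take_subset _ _ hx')⟩
        have hmrg_sorted : mrg.Pairwise (· < ·) := (Finset.sortedLT_sort _).pairwise
        have hmrg_nodup : mrg.Nodup := Finset.sort_nodup _ _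
        have hmrg_mem : ∀ x, x ∈ mrg ↔ x ∈ α.take a ∨ x ∈ β.take (t - a) := by
          intro x
          rw [hmrgdef, Finset.mem_sort, Finset.mem_union, List.mem_toFinset, List.mem_toFinset]
        have hmrg_perm : mrg.Perm (α.take a ++ β.take (t - a)) := by
          apply List.perm_of_nodup_nodup_toFinset_eq hmrg_nodup hndapp
          rw [hmrgdef, Finset.sort_toFinset, List.toFinset_append]
        have hlta : (α.take a).length = a := by rw [List.length_take]; omega
        have hltb : (β.take (t - a)).length = t - a := by rw [List.length_take]; omega
        have hmrg_len : mrg.length = t := by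
          rw [hmrg_perm.length_eq, List.length_append, hlta, hltb]
          omega
        refine Finset.card_bij' (fun τ _ => τ.drop t) (fun R _ => mrg ++ R) ?_ ?_ ?_ ?_
        · intro τ hτ
          show τ.drop t ∈ (SH (α.drop a) (β.drop (t - a))).filter
            (fun R => Des R ⊆ dropF T t)
          rw [Finset.mem_filter] at hτ
          obtain ⟨hτ', haOf⟩ := hτ
          rw [Finset.mem_filter] at hτ'
          obtain ⟨hτSH, hDes⟩ := hτ'
          obtain ⟨f1, f2, f3, f4, f5, f6, f7, f8, f9, f10⟩ :=
            fiber_facts hd hτSH hDes ht1 ht2 htmin haOf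
          have hpermτ := (mem_SH.1 hτSH).1
          have hBperm : (τ.take t).Perm (α.take a ++ β.take (t - a)) := by
            have hpp := List.filter_append_perm (fun x => decide (x ∈ α)) (τ.take t)
            have hcongr : (τ.take t).filter (fun x => ! decide (x ∈ α))
                = (τ.take t).filter (fun x => decide (x ∈ β)) := by
              apply List.filter_congr
              intro x hx
              have hxαβ : x ∈ α ++ β := hpermτ.subset (List.take_subset t τ hx)
              rcases List.mem_append.1 hxαβ with h | h
              · have hnb : x ∉ β := fun hxb => hdis h hxb
                simp [h, hnb]
              · have hna : x ∉ α := fun hxa => hdis hxa h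
                simp [h, hna]
            rw [hcongr, f4, f5] at hpp
            exact hpp.symm
          rw [Finset.mem_filter]
          constructor
          · rw [mem_SH]
            refine ⟨?_, f6, f7⟩
            rw [List.perm_iff_count]
            intro x
            have e0 : List.count x (τ.take t) + List.count x (τ.drop t) = List.count x τ := by
              rw [← List.count_append, List.take_append_drop]
            have e1 : List.count x τ = List.count x α + List.count x β := by
              rw [hpermτ.count_eq x, List.count_append]
            have e2 : List.count x (τ.take t)
                = List.count x (α.take a) + List.count x (β.take (t - a)) := by
              rw [hBperm.count_eq x, List.count_append]
            have e3 : List.count x (α.take a) + List.count x (α.drop a) = List.count x α := by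
              rw [← List.count_append, List.take_append_drop]
            have e4 : List.count x (β.take (t - a)) + List.count x (β.drop (t - a))
                = List.count x β := by
              rw [← List.count_append, List.take_append_drop]
            have e5 : List.count x (α.drop a ++ β.drop (t - a))
                = List.count x (α.drop a) + List.count x (β.drop (t - a)) :=
              List.count_append (a := x)
            omega
          · rw [Des_drop]
            exact dropF_mono hDes t
        · intro R hR
          show mrg ++ R ∈ ((SH α β).filter (fun τ => Des τ ⊆ T)).filter
            (fun τ => ((τ.take t).filter (fun x => decide (x ∈ α))).length = a)
          rw [Finset.mem_filter] at hR
          obtain ⟨hRSH, hRDes⟩ := hR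
          have hRperm := (mem_SH.1 hRSH).1
          have hRa : (α.drop a).Sublist R := (mem_SH.1 hRSH).2.1
          have hRb : (β.drop (t - a)).Sublist R := (mem_SH.1 hRSH).2.2
          have hRlen : R.length = α.length + β.length - t := by
            rw [SH_length hRSH, List.length_drop, List.length_drop]
            omega
          have hSHmem : mrg ++ R ∈ SH α β := by
            rw [mem_SH]
            refine ⟨?_, ?_, ?_⟩
            · rw [List.perm_iff_count]
              intro x
              have c1 : List.count x (mrg ++ R) = List.count x mrg + List.count x R :=
                List.count_append (a := x)
              have c2 : List.count x mrg
                  = List.count x (α.take a) + List.count x (β.take (t - a)) := by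
                rw [hmrg_perm.count_eq x, List.count_append]
              have c3 : List.count x R
                  = List.count x (α.drop a) + List.count x (β.drop (t - a)) := by
                rw [hRperm.count_eq x, List.count_append]
              have c4 : List.count x (α.take a) + List.count x (α.drop a) = List.count x α := by
                rw [← List.count_append, List.take_append_drop]
              have c5 : List.count x (β.take (t - a)) + List.count x (β.drop (t - a))
                  = List.count x β := by
                rw [← List.count_append, List.take_append_drop]
              have c6 : List.count x (α ++ β) = List.count x α + List.count x β :=
                List.count_append (a := x)
              omega
            · have htka : (α.take a).Sublist mrg :=
                sublist_of_sorted_subset mrg (α.take a) hsortα hmrg_sorted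
                  (fun x hx => (hmrg_mem x).2 (Or.inl hx))
              have := htka.append hRa
              rwa [List.take_append_drop] at this
            · have htkb : (β.take (t - a)).Sublist mrg :=
                sublist_of_sorted_subset mrg (β.take (t - a)) hsortβ hmrg_sorted
                  (fun x hx => (hmrg_mem x).2 (Or.inr hx))
              have := htkb.append hRb
              rwa [List.take_append_drop] at this
          rw [Finset.mem_filter, Finset.mem_filter]
          refine ⟨⟨hSHmem, ?_⟩, ?_⟩
          · -- Des (mrg ++ R) ⊆ T
            intro i hi
            have hb := (mem_Des'.1 hi).1
            have hlen2 : (mrg ++ R).length = α.length + β.length := by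
              rw [List.length_append, hmrg_len, hRlen]
              omega
            rcases lt_trichotomy i t with hlt | heq | hgt
            · exfalso
              have h3 : i ∈ Des mrg := (mem_Des_append_left (by rw [hmrg_len]; omega)).1 hi
              rw [sorted_des_empty hmrg_sorted] at h3
              exact Finset.notMem_empty _ h3
            · rcases Nat.lt_or_ge t (α.length + β.length) with h | h
              · rw [heq]
                exact htmem h
              · exfalso
                rw [hlen2] at hb
                omega
            · have h1t : 1 ≤ i - t := by omega
              have h3 : i - t + mrg.length ∈ Des (mrg ++ R) := by
                rw [hmrg_len, show i - t + t = i by omega]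
                exact hi
              have hiR : i - t ∈ Des R := (mem_Des_append_right h1t).1 h3
              rcases mem_dropF.1 (hRDes hiR) with ⟨u, huT, hu1, hu2⟩
              rw [show i = u by omega]
              exact huT
          · -- aOf (mrg ++ R) = a
            have htake : (mrg ++ R).take t = mrg := by
              rw [← hmrg_len]
              exact List.take_left (l₁ := mrg) (l₂ := R)
            rw [htake]
            have hpf : (mrg.filter (fun x => decide (x ∈ α))).Perm
                ((α.take a ++ β.take (t - a)).filter (fun x => decide (x ∈ α))) :=
              hmrg_perm.filter _
            rw [List.filter_append] at hpf
            have f1 : (α.take a).filter (fun x => decide (x ∈ α)) = α.take a :=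
              List.filter_eq_self.2 (fun x hx => by
                simp only [decide_eq_true_eq]
                exact List.take_subset _ _ hx)
            have f2 : (β.take (t - a)).filter (fun x => decide (x ∈ α)) = [] :=
              List.filter_eq_nil_iff.2 (fun x hx => by
                simp only [decide_eq_true_eq]
                exact fun h => hdis h (List.take_subset _ _ hx))
            rw [f1, f2, List.append_nil] at hpf
            rw [hpf.length_eq, hlta]
        · intro τ hτ
          rw [Finset.mem_filter] at hτ
          obtain ⟨hτ', haOf⟩ := hτ
          rw [Finset.mem_filter] at hτ'
          obtain ⟨hτSH, hDes⟩ := hτ'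
          obtain ⟨f1, f2, f3, f4, f5, f6, f7, f8, f9, f10⟩ :=
            fiber_facts hd hτSH hDes ht1 ht2 htmin haOf
          have hpermτ := (mem_SH.1 hτSH).1
          have hmrgB : mrg = τ.take t := by
            apply sorted_eq_of_mem_iff hmrg_sorted f8
            intro x
            rw [hmrg_mem x]
            constructor
            · rintro (h | h)
              · rw [← f4] at h
                exact (List.mem_filter.1 h).1
              · rw [← f5] at h
                exact (List.mem_filter.1 h).1
            · intro hx
              have hxαβ : x ∈ α ++ β := hpermτ.subset (List.take_subset t τ hx)
              rcases List.mem_append.1 hxαβ with h | h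
              · left
                rw [← f4, List.mem_filter]
                exact ⟨hx, by simp [h]⟩
              · right
                rw [← f5, List.mem_filter]
                exact ⟨hx, by simp [h]⟩
          show mrg ++ τ.drop t = τ
          rw [hmrgB, List.take_append_drop]
        · intro R hR
          show (mrg ++ R).drop t = R
          rw [← hmrg_len]
          exact List.drop_left (l₁ := mrg) (l₂ := R)
      · rw [dif_neg hg]
        rw [Finset.card_eq_zero, Finset.filter_eq_empty_iff]
        intro τ hτ haOf
        rw [Finset.mem_filter] at hτ
        obtain ⟨hτSH, hDes⟩ := hτ
        obtain ⟨f1, f2, f3, f4, f5, f6, f7, f8, f9, f10⟩ :=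
          fiber_facts hd hτSH hDes ht1 ht2 htmin haOf
        exact hg ⟨f1, f2, f3, f9, f10⟩

lemma card_des_subset_eq_sum (α β : List ℕ) (T : Finset ℕ) :
    ((SH α β).filter (fun τ => Des τ ⊆ T)).card
      = ∑ R ∈ T.powerset, ((SH α β).filter (fun τ => Des τ = R)).card := by
  rw [Finset.card_eq_sum_card_fiberwise
    (f := fun τ => Des τ) (t := T.powerset)
    (fun τ hτ => Finset.mem_powerset.2 (Finset.mem_filter.1 hτ).2)]
  apply Finset.sum_congr rfl
  intro R hR
  congr 1
  ext τ
  simp only [Finset.mem_filter, and_assoc]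
  constructor
  · rintro ⟨h1, _, h3⟩
    exact ⟨h1, h3⟩
  · rintro ⟨h1, h3⟩
    exact ⟨h1, by rw [h3]; exact Finset.mem_powerset.1 hR, h3⟩

lemma C2 (α β : List ℕ) (hd : (α ++ β).Nodup) (T : Finset ℕ) :
    (((SH α β).filter (fun τ => Des τ = T)).card : ℤ)
      = NE α.length β.length (Des α) (Des β) T := by
  induction T using Finset.strongInductionOn with
  | _ T ih =>
    rw [NE, Finset.sum_attach (T.powerset.erase T)
      (fun R => NE α.length β.length (Des α) (Des β) R)]
    have hNF : (NF α.length β.length (Des α) (Des β) T : ℤ)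
        = ((SH α β).filter (fun τ => Des τ ⊆ T)).card := by
      rw [C1 (α.length + β.length) α β T rfl hd]
    rw [hNF, card_des_subset_eq_sum α β T]
    have hsplit : ∑ R ∈ T.powerset, ((SH α β).filter (fun τ => Des τ = R)).card
        = ((SH α β).filter (fun τ => Des τ = T)).card
          + ∑ R ∈ T.powerset.erase T, ((SH α β).filter (fun τ => Des τ = R)).card :=
      (Finset.add_sum_erase _ _ (Finset.mem_powerset.2 (subset_refl T))).symm
    rw [hsplit]
    push_cast
    have hIH : ∑ R ∈ T.powerset.erase T, ((((SH α β).filter (fun τ => Des τ = R)).card : ℤ))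
        = ∑ R ∈ T.powerset.erase T, NE α.length β.length (Des α) (Des β) R := by
      apply Finset.sum_congr rfl
      intro R hR
      rw [Finset.mem_erase, Finset.mem_powerset] at hR
      exact ih R (lt_of_le_of_ne hR.2 hR.1)
    rw [← hIH]
    ring

/- ===== sums over rotations as multiset sums ===== -/

lemma sum_range_stat {A : Type*} [AddCommMonoid A] (l : List ℕ) (F : Finset ℕ → A) :
    ∑ i ∈ Finset.range l.length, F (cDes (l.rotate i)) = ((cycStat cDes l).map F).sum := by
  rw [Finset.sum_eq_multiset_sum, Finset.range_val, cycStat, Multiset.map_map]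
  rfl

lemma Vc_formula {π σ : List ℕ} (hd : (π ++ σ).Nodup) (T : Finset ℕ) :
    (((TT π σ).filter (fun τ => Des τ = T)).card : ℤ)
      = ((cycStat cDes π).map (fun A =>
          ((cycStat cDes σ).map (fun B =>
             NE π.length σ.length (A.erase π.length) (B.erase σ.length) T)).sum)).sum := by
  rw [TT_filter_card hd (fun τ => Des τ = T)]
  push_cast
  rw [Finset.sum_product]
  have hstep : ∀ i ∈ Finset.range π.length,
      (∑ j ∈ Finset.range σ.length,
        ((((SH (π.rotate i) (σ.rotate j)).filter (fun τ => Des τ = T)).card : ℤ)))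
      = ((cycStat cDes σ).map (fun B =>
           NE π.length σ.length ((cDes (π.rotate i)).erase π.length) (B.erase σ.length) T)).sum := by
    intro i _
    rw [← sum_range_stat σ (fun B =>
      NE π.length σ.length ((cDes (π.rotate i)).erase π.length) (B.erase σ.length) T)]
    apply Finset.sum_congr rfl
    intro j _
    have hd2 := nodup_rotate_append hd i j
    have := C2 (π.rotate i) (σ.rotate j) hd2 T
    rw [this, Des_eq_cDes_erase (π.rotate i), Des_eq_cDes_erase (σ.rotate j)]
    simp [List.length_rotate]
  rw [Finset.sum_congr rfl hstep]
  rw [← sum_range_stat π (fun A =>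
    ((cycStat cDes σ).map (fun B =>
      NE π.length σ.length (A.erase π.length) (B.erase σ.length) T)).sum)]

/- ===== U and V statistics on TT ===== -/

def Uc (π σ : List ℕ) (S : Finset ℕ) : ℕ :=
  ((TT π σ).filter (fun τ => cDes τ = S)).card

def Vc (π σ : List ℕ) (T : Finset ℕ) : ℕ :=
  ((TT π σ).filter (fun τ => Des τ = T)).card

lemma Uc_empty {π σ : List ℕ} (hd : (π ++ σ).Nodup) (hn : 0 < π.length)
    (hm : 0 < σ.length) : Uc π σ ∅ = 0 := by
  rw [Uc, Finset.card_eq_zero, Finset.filter_eq_empty_iff]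
  intro τ hτ
  have h1 := TT_nodup hd hτ
  have h2 := TT_length hτ
  exact cDes_nonempty h1 (by omega)

lemma Uc_not_subset {π σ : List ℕ} {S : Finset ℕ}
    (hS : ¬ S ⊆ Finset.Icc 1 (π.length + σ.length)) : Uc π σ S = 0 := by
  rw [Uc, Finset.card_eq_zero, Finset.filter_eq_empty_iff]
  intro τ hτ h
  apply hS
  rw [← h]
  have h2 := TT_length hτ
  rw [← h2]
  exact cDes_subset τ

lemma Uc_shift {π σ : List ℕ} {S : Finset ℕ} (hd : (π ++ σ).Nodup) (hn : 0 < π.length)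
    (hm : 0 < σ.length) (hS : S ⊆ Finset.Icc 1 (π.length + σ.length)) :
    Uc π σ (decI (π.length + σ.length) S) = Uc π σ S := by
  set L := π.length + σ.length with hL
  refine Finset.card_bij' (fun τ _ => τ.rotate (L - 1)) (fun τ _ => τ.rotate 1) ?_ ?_ ?_ ?_
  case refine_1
  · intro τ hτ
    rw [Finset.mem_filter] at hτ ⊢
    obtain ⟨h1, h2⟩ := hτ
    have hlen := TT_length h1
    refine ⟨TT_rotate hd hn hm h1 (L-1), ?_⟩
    have hback : (τ.rotate (L-1)).rotate 1 = τ := by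
      rw [List.rotate_rotate]
      rw [show L - 1 + 1 = τ.length by omega]
      exact List.rotate_length τ
    have hcd : cDes ((τ.rotate (L-1)).rotate 1) = decI L (cDes (τ.rotate (L-1))) := by
      have := cDes_rotate_one (l := τ.rotate (L-1)) (by simp [List.length_rotate]; omega)
      rwa [List.length_rotate, hlen] at this
    rw [hback, h2] at hcd
    have hsub : cDes (τ.rotate (L-1)) ⊆ Finset.Icc 1 L := by
      have := cDes_subset (τ.rotate (L-1))
      rwa [List.length_rotate, hlen] at this
    exact (decI_inj hS hsub hcd).symm
  case refine_2
  · intro τ hτ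
    rw [Finset.mem_filter] at hτ ⊢
    obtain ⟨h1, h2⟩ := hτ
    have hlen := TT_length h1
    refine ⟨TT_rotate hd hn hm h1 1, ?_⟩
    have hcd : cDes (τ.rotate 1) = decI L (cDes τ) := by
      have := cDes_rotate_one (l := τ) (by omega)
      rwa [hlen] at this
    rw [hcd, h2]
  case refine_3
  · intro τ hτ
    rw [Finset.mem_filter] at hτ
    have hlen := TT_length hτ.1
    show (τ.rotate (L - 1)).rotate 1 = τ
    rw [List.rotate_rotate, show L - 1 + 1 = τ.length by omega]
    exact List.rotate_length τ
  case refine_4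
  · intro τ hτ
    rw [Finset.mem_filter] at hτ
    have hlen := TT_length hτ.1
    show (τ.rotate 1).rotate (L - 1) = τ
    rw [List.rotate_rotate, show 1 + (L - 1) = τ.length by omega]
    exact List.rotate_length τ

lemma decI_iter_subset {L r : ℕ} {S : Finset ℕ} (hS : S ⊆ Finset.Icc 1 L) :
    (decI L)^[r] S ⊆ Finset.Icc 1 L := by
  induction r with
  | zero => simpa using hS
  | succ r ih =>
    rw [Function.iterate_succ_apply']
    exact decI_subset ih

lemma decI_iter_card {L r : ℕ} {S : Finset ℕ} (hS : S ⊆ Finset.Icc 1 L) :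
    ((decI L)^[r] S).card = S.card := by
  induction r with
  | zero => simp
  | succ r ih =>
    rw [Function.iterate_succ_apply', decI_card (decI_iter_subset hS), ih]

lemma Uc_shift_iter {π σ : List ℕ} {S : Finset ℕ} (hd : (π ++ σ).Nodup) (hn : 0 < π.length)
    (hm : 0 < σ.length) (hS : S ⊆ Finset.Icc 1 (π.length + σ.length)) (r : ℕ) :
    Uc π σ ((decI (π.length + σ.length))^[r] S) = Uc π σ S := by
  induction r with
  | zero => simp
  | succ r ih =>
    rw [Function.iterate_succ_apply', Uc_shift hd hn hm (decI_iter_subset hS), ih]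

lemma mem_decI_iter {L r x : ℕ} {S : Finset ℕ} (hx : x ∈ S) :
    (decP L)^[r] x ∈ (decI L)^[r] S := by
  induction r with
  | zero => simpa using hx
  | succ r ih =>
    rw [Function.iterate_succ_apply', Function.iterate_succ_apply']
    exact Finset.mem_image_of_mem _ ih

lemma decP_iter_self {L s : ℕ} (h1 : 1 ≤ s) (h2 : s ≤ L) : (decP L)^[s] s = L := by
  have key : ∀ k, k ≤ s - 1 → (decP L)^[k] s = s - k := by
    intro k
    induction k with
    | zero => simp
    | succ k ih =>
      intro hk
      rw [Function.iterate_succ_apply', ih (by omega)]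
      unfold decP
      rw [if_neg (by omega)]
      omega
  have hs1 : (decP L)^[s - 1] s = 1 := by
    rw [key (s-1) (le_refl _)]
    omega
  have hstep := Function.iterate_succ_apply' (decP L) (s-1) s
  rw [Nat.succ_eq_add_one, show s - 1 + 1 = s by omega] at hstep
  rw [hstep, hs1]
  unfold decP
  rw [if_pos rfl]

lemma erase_eq_iff_or {X T : Finset ℕ} {L : ℕ} (hL : L ∉ T) :
    X.erase L = T ↔ X = T ∨ X = insert L T := by
  constructor
  · intro h
    by_cases hx : L ∈ X
    · right; rw [← h, Finset.insert_erase hx]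
    · left; rw [← h, Finset.erase_eq_of_notMem hx]
  · rintro (rfl | rfl)
    · exact Finset.erase_eq_of_notMem hL
    · exact Finset.erase_insert hL

lemma Vc_split {π σ : List ℕ} {T : Finset ℕ} (hd : (π ++ σ).Nodup)
    (hT : T ⊆ Finset.Icc 1 (π.length + σ.length - 1)) (hL : 1 ≤ π.length + σ.length) :
    Vc π σ T = Uc π σ T + Uc π σ (insert (π.length + σ.length) T) := by
  set L := π.length + σ.length with hLdef
  have hLT : L ∉ T := by
    intro h
    have := hT h
    rw [Finset.mem_Icc] at this
    omega
  have hsplit : (TT π σ).filter (fun τ => Des τ = T)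
      = ((TT π σ).filter (fun τ => cDes τ = T)) ∪ ((TT π σ).filter (fun τ => cDes τ = insert L T)) := by
    ext τ
    simp only [Finset.mem_union, Finset.mem_filter]
    constructor
    · rintro ⟨h1, h2⟩
      have hlen := TT_length h1
      rw [Des_eq_cDes_erase, hlen] at h2
      rcases (erase_eq_iff_or hLT).1 h2 with h | h
      · exact Or.inl ⟨h1, h⟩
      · exact Or.inr ⟨h1, h⟩
    · rintro (⟨h1, h2⟩ | ⟨h1, h2⟩)
      · refine ⟨h1, ?_⟩
        rw [Des_eq_cDes_erase, TT_length h1, h2]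
        exact Finset.erase_eq_of_notMem hLT
      · refine ⟨h1, ?_⟩
        rw [Des_eq_cDes_erase, TT_length h1, h2]
        exact Finset.erase_insert hLT
  have hdisj : Disjoint ((TT π σ).filter (fun τ => cDes τ = T))
      ((TT π σ).filter (fun τ => cDes τ = insert L T)) := by
    rw [Finset.disjoint_left]
    intro τ h1 h2
    rw [Finset.mem_filter] at h1 h2
    have : T = insert L T := h1.2 ▸ h2.2
    exact hLT (this ▸ Finset.mem_insert_self L T)
  rw [Vc, hsplit, Finset.card_union_of_disjoint hdisj]
  rfl

lemma Vc_eq {π σ π' σ' : List ℕ} (hd : (π ++ σ).Nodup) (hd' : (π' ++ σ').Nodup)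
    (hlen1 : π.length = π'.length) (hlen2 : σ.length = σ'.length)
    (hst1 : cycStat cDes π = cycStat cDes π') (hst2 : cycStat cDes σ = cycStat cDes σ')
    (T : Finset ℕ) : Vc π σ T = Vc π' σ' T := by
  have h1 := Vc_formula hd T
  have h2 := Vc_formula hd' T
  rw [hst1, hst2, hlen1, hlen2] at h1
  have : ((Vc π σ T : ℤ)) = ((Vc π' σ' T : ℤ)) := by
    rw [Vc, Vc, h1, h2]
  exact_mod_cast this

lemma Uc_eq {π σ π' σ' : List ℕ} (hd : (π ++ σ).Nodup) (hd' : (π' ++ σ').Nodup)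
    (hn : 0 < π.length) (hm : 0 < σ.length)
    (hlen1 : π.length = π'.length) (hlen2 : σ.length = σ'.length)
    (hst1 : cycStat cDes π = cycStat cDes π') (hst2 : cycStat cDes σ = cycStat cDes σ') :
    ∀ (k : ℕ) (S : Finset ℕ), S.card = k → S ⊆ Finset.Icc 1 (π.length + σ.length) →
      Uc π σ S = Uc π' σ' S := by
  set L := π.length + σ.length with hLdef
  have hn' : 0 < π'.length := hlen1 ▸ hn
  have hm' : 0 < σ'.length := hlen2 ▸ hm
  have hL' : π'.length + σ'.length = L := by omega
  intro k
  induction k using Nat.strong_induction_on with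
  | _ k ih =>
    intro S hcard hsub
    by_cases hS : S = ∅
    · subst hS
      rw [Uc_empty hd hn hm, Uc_empty hd' hn' hm']
    · obtain ⟨s, hs⟩ := Finset.nonempty_iff_ne_empty.2 hS
      have hsIcc := hsub hs
      rw [Finset.mem_Icc] at hsIcc
      set S' := (decI L)^[s] S with hS'def
      have hLS' : L ∈ S' := by
        have := mem_decI_iter (L := L) (r := s) hs
        rwa [decP_iter_self hsIcc.1 hsIcc.2] at this
      have hS'sub : S' ⊆ Finset.Icc 1 L := decI_iter_subset hsub
      have hS'card : S'.card = S.card := decI_iter_card hsub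
      set T := S'.erase L with hTdef
      have hTsub : T ⊆ Finset.Icc 1 (L - 1) := by
        intro x hx
        rw [Finset.mem_erase] at hx
        have := hS'sub hx.2
        rw [Finset.mem_Icc] at *
        constructor
        · exact this.1
        · have := this.2
          omega
      have hTsub' : T ⊆ Finset.Icc 1 L := hTsub.trans (Finset.Icc_subset_Icc_right (by omega))
      have hTcard : T.card = k - 1 := by
        rw [hTdef, Finset.card_erase_of_mem hLS', hS'card, hcard]
      have hins : insert L T = S' := Finset.insert_erase hLS'
      have hU4 : Vc π σ T = Uc π σ T + Uc π σ S' := by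
        rw [← hins]
        exact Vc_split hd hTsub (by omega)
      have hU4' : Vc π' σ' T = Uc π' σ' T + Uc π' σ' S' := by
        rw [← hins]
        have := Vc_split (π := π') (σ := σ') hd' (T := T) (by rw [hL']; exact hTsub) (by omega)
        rwa [hL'] at this
      have hVeq : Vc π σ T = Vc π' σ' T := Vc_eq hd hd' hlen1 hlen2 hst1 hst2 T
      have hScard1 : 1 ≤ S.card := Finset.card_pos.2 ⟨s, hs⟩
      have hUT : Uc π σ T = Uc π' σ' T := ih (k-1) (by omega) T hTcard hTsub'
      have hUS : Uc π σ S' = Uc π σ S := Uc_shift_iter hd hn hm hsub s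
      have hUS' : Uc π' σ' S' = Uc π' σ' S := by
        have := Uc_shift_iter hd' hn' hm' (S := S) (by rw [hL']; exact hsub) s
        rwa [hL'] at this
      omega

/- ===== fiber counting ===== -/

def Phi (L : ℕ) (S : Finset ℕ) : Multiset (Finset ℕ) :=
  (Multiset.range L).map (fun r => (decI L)^[r] S)

lemma Tv_card {π σ : List ℕ} (hd : (π ++ σ).Nodup) (hn : 0 < π.length) (hm : 0 < σ.length)
    (v : Multiset (Finset ℕ)) :
    ((TT π σ).filter (fun τ => cycStat cDes τ = v)).card
      = ∑ S ∈ ((Finset.Icc 1 (π.length + σ.length)).powerset.filter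
          (fun S => Phi (π.length + σ.length) S = v)), Uc π σ S := by
  set L := π.length + σ.length with hLdef
  have hmem : ∀ τ ∈ (TT π σ).filter (fun τ => cycStat cDes τ = v),
      cDes τ ∈ (Finset.Icc 1 L).powerset.filter (fun S => Phi L S = v) := by
    intro τ hτ
    rw [Finset.mem_filter] at hτ
    obtain ⟨hTT, hst⟩ := hτ
    have hlen := TT_length hTT
    rw [Finset.mem_filter, Finset.mem_powerset]
    constructor
    · have := cDes_subset τ
      rwa [hlen] at this
    · rw [← hst, cycStat_cDes_formula (by omega), hlen]
      rfl
  rw [Finset.card_eq_sum_card_fiberwise hmem]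
  apply Finset.sum_congr rfl
  intro S hS
  rw [Finset.mem_filter] at hS
  rw [Uc]
  congr 1
  ext τ
  simp only [Finset.mem_filter, and_assoc]
  constructor
  · rintro ⟨h1, _, h3⟩
    exact ⟨h1, h3⟩
  · rintro ⟨h1, h3⟩
    refine ⟨h1, ?_, h3⟩
    have hlen := TT_length h1
    rw [cycStat_cDes_formula (by omega), hlen, h3]
    exact hS.2

lemma fiber_eq {π σ : List ℕ} (hd : (π ++ σ).Nodup) (hn : 0 < π.length) (hm : 0 < σ.length)
    (v : Multiset (Finset ℕ)) :
    cycShuffleFiber (cycStat cDes) π σ v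
      = ↑(((TT π σ).filter (fun τ => cycStat cDes τ = v)).image (fun τ : List ℕ => (↑τ : Cycle ℕ))) := by
  ext c
  simp only [cycShuffleFiber, Set.mem_setOf_eq, Finset.coe_image, Set.mem_image,
    Finset.mem_coe, Finset.mem_filter]
  constructor
  · rintro ⟨τ, rfl, ⟨i, j, k, hsh⟩, hst⟩
    refine ⟨τ, ⟨?_, hst⟩, rfl⟩
    have hrot : τ.rotate k ∈ SH (π.rotate (i % π.length)) (σ.rotate (j % σ.length)) := by
      rw [List.rotate_mod, List.rotate_mod]
      exact (isShuffle_iff_mem_SH (nodup_rotate_append hd i j)).1 hsh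
    have hTT : τ.rotate k ∈ TT π σ :=
      mem_TT.2 ⟨_, Nat.mod_lt _ hn, _, Nat.mod_lt _ hm, hrot⟩
    have hlen : τ.length = π.length + σ.length := by
      have := TT_length hTT
      rwa [List.length_rotate] at this
    set L := π.length + σ.length with hLdef
    have hLpos : 0 < L := by omega
    have hkey : (τ.rotate k).rotate (L - k % L) = τ := by
      rw [List.rotate_rotate]
      have h2 : k % L < L := Nat.mod_lt _ hLpos
      have h1 : (k + (L - k % L)) % L = 0 := by
        rw [← Nat.mod_add_mod, show k % L + (L - k % L) = L by omega, Nat.mod_self]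
      have h3 : τ.rotate (k + (L - k % L)) = τ.rotate ((k + (L - k % L)) % τ.length) := by
        rw [List.rotate_mod]
      rw [h3, hlen, h1, List.rotate_zero]
    rw [← hkey]
    exact TT_rotate hd hn hm hTT _
  · rintro ⟨τ, ⟨hTT, hst⟩, rfl⟩
    refine ⟨τ, rfl, ?_, hst⟩
    rcases mem_TT.1 hTT with ⟨i, hi, j, hj, hsh⟩
    exact ⟨i, j, 0, by
      rw [List.rotate_zero]
      exact (isShuffle_iff_mem_SH (nodup_rotate_append hd i j)).2 hsh⟩

lemma fiber_card {π σ : List ℕ} (hd : (π ++ σ).Nodup) (hn : 0 < π.length) (hm : 0 < σ.length)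
    (v : Multiset (Finset ℕ)) :
    ((TT π σ).filter (fun τ => cycStat cDes τ = v)).card
      = (((TT π σ).filter (fun τ => cycStat cDes τ = v)).image
          (fun τ : List ℕ => (↑τ : Cycle ℕ))).card * (π.length + σ.length) := by
  set L := π.length + σ.length with hLdef
  set Tv := (TT π σ).filter (fun τ => cycStat cDes τ = v) with hTvdef
  rw [Finset.card_eq_sum_card_fiberwise
    (f := fun τ : List ℕ => (↑τ : Cycle ℕ)) (t := Tv.image (fun τ : List ℕ => (↑τ : Cycle ℕ)))
    (fun τ hτ => Finset.mem_image_of_mem _ hτ)]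
  have hfiber : ∀ c ∈ Tv.image (fun τ : List ℕ => (↑τ : Cycle ℕ)),
      (Tv.filter (fun τ : List ℕ => (↑τ : Cycle ℕ) = c)).card = L := by
    intro c hc
    obtain ⟨τ₀, hτ₀, rfl⟩ := Finset.mem_image.1 hc
    rw [Finset.mem_filter] at hτ₀
    obtain ⟨hTT₀, hst₀⟩ := hτ₀
    have hlen₀ : τ₀.length = L := TT_length hTT₀
    have hnd₀ : τ₀.Nodup := TT_nodup hd hTT₀
    have hset : Tv.filter (fun τ : List ℕ => (↑τ : Cycle ℕ) = (↑τ₀ : Cycle ℕ))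
        = (Finset.range L).image (fun r => τ₀.rotate r) := by
      ext τ
      rw [Finset.mem_filter, Finset.mem_image]
      constructor
      · rintro ⟨hτv, hcoe⟩
        have hrot : τ₀.IsRotated τ := (Cycle.coe_eq_coe.1 hcoe).symm
        obtain ⟨r', hr'⟩ := hrot
        refine ⟨r' % L, Finset.mem_range.2 (Nat.mod_lt _ (by omega)), ?_⟩
        rw [← hlen₀, List.rotate_mod, hr']
      · rintro ⟨r, hr, rfl⟩
        rw [hTvdef, Finset.mem_filter]
        refine ⟨⟨TT_rotate hd hn hm hTT₀ r, ?_⟩, ?_⟩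
        · rw [cycStat_rotate]
          exact hst₀
        · exact Cycle.coe_eq_coe.2 (List.IsRotated.symm ⟨r, rfl⟩)
    rw [hset, Finset.card_image_of_injOn, Finset.card_range]
    intro a ha b hb hab
    rw [Finset.coe_range, Set.mem_Iio] at ha hb
    exact rotate_inj_of_nodup hnd₀ (by omega) (by omega) hab
  rw [Finset.sum_congr rfl hfiber, Finset.sum_const, smul_eq_mul]

lemma fiber_ncard {π σ : List ℕ} (hd : (π ++ σ).Nodup) (hn : 0 < π.length)
    (hm : 0 < σ.length) (v : Multiset (Finset ℕ)) :
    (cycShuffleFiber (cycStat cDes) π σ v).ncard * (π.length + σ.length)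
      = ((TT π σ).filter (fun τ => cycStat cDes τ = v)).card := by
  rw [fiber_eq hd hn hm v, Set.ncard_coe_finset, fiber_card hd hn hm v]

/- ===== degenerate cases ===== -/

lemma fiber_nil_left (σ : List ℕ) (v : Multiset (Finset ℕ)) :
    cycShuffleFiber (cycStat cDes) [] σ v
      = if cycStat cDes σ = v then {(↑σ : Cycle ℕ)} else ∅ := by
  ext c
  simp only [cycShuffleFiber, Set.mem_setOf_eq]
  constructor
  · rintro ⟨τ, rfl, ⟨i, j, k, hsh⟩, hst⟩
    obtain ⟨h1, h2, h3⟩ := hsh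
    rw [List.rotate_nil] at h3
    have heq : τ.rotate k = σ.rotate j := (h2.eq_of_length (by simp [h3])).symm
    have hrot : τ.IsRotated σ :=
      (List.IsRotated.trans ⟨k, heq⟩ (List.IsRotated.symm ⟨j, rfl⟩))
    obtain ⟨r, hr⟩ := hrot
    have hstσ : cycStat cDes σ = v := by
      rw [← hr, cycStat_rotate]
      exact hst
    rw [if_pos hstσ]
    rw [Set.mem_singleton_iff]
    exact Cycle.coe_eq_coe.2 ⟨r, hr⟩
  · intro hc
    split at hc
    · rw [Set.mem_singleton_iff] at hc
      refine ⟨σ, hc.symm, ⟨0, 0, 0, ?_⟩, ‹cycStat cDes σ = v›⟩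
      simp only [List.rotate_zero]
      exact ⟨List.nil_sublist σ, List.Sublist.refl σ, by simp⟩
    · exact absurd hc (Set.notMem_empty c)

lemma fiber_nil_right (π : List ℕ) (v : Multiset (Finset ℕ)) :
    cycShuffleFiber (cycStat cDes) π [] v
      = if cycStat cDes π = v then {(↑π : Cycle ℕ)} else ∅ := by
  ext c
  simp only [cycShuffleFiber, Set.mem_setOf_eq]
  constructor
  · rintro ⟨τ, rfl, ⟨i, j, k, hsh⟩, hst⟩
    obtain ⟨h1, h2, h3⟩ := hsh
    rw [List.rotate_nil] at h3
    have heq : τ.rotate k = π.rotate i := (h1.eq_of_length (by simp [h3])).symm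
    have hrot : τ.IsRotated π :=
      (List.IsRotated.trans ⟨k, heq⟩ (List.IsRotated.symm ⟨i, rfl⟩))
    obtain ⟨r, hr⟩ := hrot
    have hstπ : cycStat cDes π = v := by
      rw [← hr, cycStat_rotate]
      exact hst
    rw [if_pos hstπ]
    rw [Set.mem_singleton_iff]
    exact Cycle.coe_eq_coe.2 ⟨r, hr⟩
  · intro hc
    split at hc
    · rw [Set.mem_singleton_iff] at hc
      refine ⟨π, hc.symm, ⟨0, 0, 0, ?_⟩, ‹cycStat cDes π = v›⟩
      simp only [List.rotate_zero]
      exact ⟨List.Sublist.refl π, List.nil_sublist π, by simp⟩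
    · exact absurd hc (Set.notMem_empty c)

/- ===== main theorem ===== -/

theorem cDes_cyclic_shuffle_compatible' : CyclicShuffleCompatible (cycStat cDes) := by
  intro π σ π' σ' hPπ hPσ hPπ' hPσ' hdis hdis' hlen1 hlen2 hst1 hst2 v
  have hd : (π ++ σ).Nodup := List.nodup_append'.2 ⟨hPπ.1, hPσ.1, hdis⟩
  have hd' : (π' ++ σ').Nodup := List.nodup_append'.2 ⟨hPπ'.1, hPσ'.1, hdis'⟩
  rcases Nat.eq_zero_or_pos π.length with hn | hn
  · have hπ : π = [] := List.length_eq_zero_iff.1 hn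
    have hπ' : π' = [] := List.length_eq_zero_iff.1 (by omega)
    subst hπ hπ'
    rw [fiber_nil_left σ v, fiber_nil_left σ' v, hst2]
    split_ifs
    · simp
    · simp
  rcases Nat.eq_zero_or_pos σ.length with hm | hm
  · have hσ : σ = [] := List.length_eq_zero_iff.1 hm
    have hσ' : σ' = [] := List.length_eq_zero_iff.1 (by omega)
    subst hσ hσ'
    rw [fiber_nil_right π v, fiber_nil_right π' v, hst1]
    split_ifs
    · simp
    · simp
  · have hn' : 0 < π'.length := by omega
    have hm' : 0 < σ'.length := by omega
    have hL' : π'.length + σ'.length = π.length + σ.length := by omega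
    have h1 := fiber_ncard hd hn hm v
    have h2 := fiber_ncard hd' hn' hm' v
    have h3 := Tv_card hd hn hm v
    have h4 := Tv_card hd' hn' hm' v
    rw [hL'] at h2 h4
    have h5 : ∑ S ∈ ((Finset.Icc 1 (π.length + σ.length)).powerset.filter
          (fun S => Phi (π.length + σ.length) S = v)), Uc π σ S
        = ∑ S ∈ ((Finset.Icc 1 (π.length + σ.length)).powerset.filter
          (fun S => Phi (π.length + σ.length) S = v)), Uc π' σ' S := by
      apply Finset.sum_congr rfl
      intro S hS
      rw [Finset.mem_filter, Finset.mem_powerset] at hS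
      exact Uc_eq hd hd' hn hm hlen1 hlen2 hst1 hst2 S.card S rfl hS.1
    have h6 : (cycShuffleFiber (cycStat cDes) π σ v).ncard * (π.length + σ.length)
        = (cycShuffleFiber (cycStat cDes) π' σ' v).ncard * (π.length + σ.length) := by
      rw [h1, h2, h3, h4, h5]
    have hLpos : 0 < π.length + σ.length := by omega
    exact Nat.eq_of_mul_eq_mul_right hLpos h6

/-- The cyclic descent set `cDes` is cyclic shuffle-compatible. -/
theorem cDes_cyclic_shuffle_compatible : CyclicShuffleCompatible (cycStat cDes) := by
  exact cDes_cyclic_shuffle_compatible'
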